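/- If a complex Hadamard matrix H is equivalent to some BH(q,n) matrix, then every dephased form of H has all entries equal to q-th roots of unity. -/

import Mathlib

open Complex Matrix BigOperators

/-- A complex Hadamard matrix: unimodular entries and `H * Hᴴ = n • 1`. -/
def IsCHadamard {n : ℕ} (H : Matrix (Fin n) (Fin n) ℂ) : Prop :=
  (∀ i j, ‖H i j‖ = 1) ∧ H * H.conjTranspose = (n : ℂ) • 1

/-- A permutation matrix. -/
def IsPermMatrix {n : ℕ} (P : Matrix (Fin n) (Fin n) ℂ) : Prop :=
  ∃ σ : Equiv.Perm (Fin n), ∀ i j, P i j = if σ j = i then 1 else 0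

/-- A diagonal matrix with unimodular diagonal entries. -/
def IsUnitaryDiag {n : ℕ} (D : Matrix (Fin n) (Fin n) ℂ) : Prop :=
  D.IsDiag ∧ ∀ i, ‖D i i‖ = 1

/-- Equivalence of complex Hadamard matrices. -/
def HadEquiv {n : ℕ} (H K : Matrix (Fin n) (Fin n) ℂ) : Prop :=
  ∃ P₁ P₂ D₁ D₂ : Matrix (Fin n) (Fin n) ℂ,
    IsPermMatrix P₁ ∧ IsPermMatrix P₂ ∧ IsUnitaryDiag D₁ ∧ IsUnitaryDiag D₂ ∧
    P₁ * D₁ * H * D₂ * P₂ = K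

/-- The Haagerup set of a matrix. -/
def HaagerupSet {n : ℕ} (H : Matrix (Fin n) (Fin n) ℂ) : Set ℂ :=
  {z | ∃ i j k l : Fin n,
    z = H i j * H k l * starRingEnd ℂ (H i l) * starRingEnd ℂ (H k j)}

lemma perm_mul_apply {n : ℕ} {P : Matrix (Fin n) (Fin n) ℂ} {σ : Equiv.Perm (Fin n)}
    (h : ∀ i j, P i j = if σ j = i then 1 else 0) (M : Matrix (Fin n) (Fin n) ℂ) (i j) :
    (P * M) i j = M (σ.symm i) j := by
  simp [Matrix.mul_apply, h, Equiv.apply_eq_iff_eq_symm_apply]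

lemma mul_perm_apply {n : ℕ} {P : Matrix (Fin n) (Fin n) ℂ} {σ : Equiv.Perm (Fin n)}
    (h : ∀ i j, P i j = if σ j = i then 1 else 0) (M : Matrix (Fin n) (Fin n) ℂ) (i j) :
    (M * P) i j = M i (σ j) := by
  simp [Matrix.mul_apply, h]

lemma diag_mul_apply {n : ℕ} {D : Matrix (Fin n) (Fin n) ℂ} (h : D.IsDiag)
    (M : Matrix (Fin n) (Fin n) ℂ) (i j) : (D * M) i j = D i i * M i j := by
  rw [Matrix.mul_apply]
  exact Finset.sum_eq_single i (fun k _ hk => by rw [h (Ne.symm hk), zero_mul]) (by simp)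

lemma mul_diag_apply {n : ℕ} {D : Matrix (Fin n) (Fin n) ℂ} (h : D.IsDiag)
    (M : Matrix (Fin n) (Fin n) ℂ) (i j) : (M * D) i j = M i j * D j j := by
  rw [Matrix.mul_apply]
  exact Finset.sum_eq_single j (fun k _ hk => by rw [h hk, mul_zero]) (by simp)

/-- Entry formula for an equivalent matrix. -/
lemma hadEquiv_entry {n : ℕ} {H K : Matrix (Fin n) (Fin n) ℂ} (h : HadEquiv H K) :
    ∃ (σ₁ σ₂ : Equiv.Perm (Fin n)) (d₁ d₂ : Fin n → ℂ),
      (∀ a, d₁ a * starRingEnd ℂ (d₁ a) = 1) ∧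
      (∀ b, d₂ b * starRingEnd ℂ (d₂ b) = 1) ∧
      ∀ i j, K i j = d₁ (σ₁.symm i) * H (σ₁.symm i) (σ₂ j) * d₂ (σ₂ j) := by
  obtain ⟨P₁, P₂, D₁, D₂, ⟨σ₁, h₁⟩, ⟨σ₂, h₂⟩, ⟨hd₁, hu₁⟩, ⟨hd₂, hu₂⟩, heq⟩ := h
  refine ⟨σ₁, σ₂, fun a => D₁ a a, fun b => D₂ b b, ?_, ?_, ?_⟩
  · intro a
    rw [Complex.mul_conj, ← Complex.sq_norm, hu₁ a]; norm_num
  · intro b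
    rw [Complex.mul_conj, ← Complex.sq_norm, hu₂ b]; norm_num
  · intro i j
    rw [← heq, mul_perm_apply h₂, mul_diag_apply hd₂, Matrix.mul_assoc,
      perm_mul_apply h₁, diag_mul_apply hd₁]

theorem dephased_entries_roots_of_unity {q n : ℕ} [NeZero n]
    (H : Matrix (Fin n) (Fin n) ℂ) (hH : IsCHadamard H)
    (hBH : ∃ B : Matrix (Fin n) (Fin n) ℂ, IsCHadamard B ∧
      (∀ i j, (B i j) ^ q = 1) ∧ HadEquiv H B)
    (K : Matrix (Fin n) (Fin n) ℂ) (hKeq : HadEquiv H K)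
    (hKrow : ∀ j, K 0 j = 1) (hKcol : ∀ i, K i 0 = 1) :
    ∀ i j, (K i j) ^ q = 1 := by
  obtain ⟨B, hB, hBq, hHB⟩ := hBH
  obtain ⟨σ₁, σ₂, d₁, d₂, hd₁, hd₂, hK⟩ := hadEquiv_entry hKeq
  obtain ⟨τ₁, τ₂, e₁, e₂, he₁, he₂, hBe⟩ := hadEquiv_entry hHB
  intro i j
  -- K i j equals a Haagerup element of H
  have key : K i j = K i j * K 0 0 * starRingEnd ℂ (K i 0) * starRingEnd ℂ (K 0 j) := by
    simp [hKrow, hKcol]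
  set a := σ₁.symm i
  set c := σ₁.symm (0 : Fin n)
  set b := σ₂ j
  set d := σ₂ (0 : Fin n)
  have hKH : K i j = H a b * H c d * starRingEnd ℂ (H a d) * starRingEnd ℂ (H c b) := by
    rw [key, hK i j, hK 0 0, hK i 0, hK 0 j]
    simp only [_root_.map_mul]
    have : d₁ a * H a b * d₂ b * (d₁ c * H c d * d₂ d) *
        (starRingEnd ℂ (d₁ a) * starRingEnd ℂ (H a d) * starRingEnd ℂ (d₂ d)) *
        (starRingEnd ℂ (d₁ c) * starRingEnd ℂ (H c b) * starRingEnd ℂ (d₂ b)) =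
        (d₁ a * starRingEnd ℂ (d₁ a)) * (d₁ c * starRingEnd ℂ (d₁ c)) *
        (d₂ b * starRingEnd ℂ (d₂ b)) * (d₂ d * starRingEnd ℂ (d₂ d)) *
        (H a b * H c d * starRingEnd ℂ (H a d) * starRingEnd ℂ (H c b)) := by ring
    rw [this, hd₁, hd₁, hd₂, hd₂]; ring
  -- express the Haagerup element of H via B
  have hHBelt : H a b * H c d * starRingEnd ℂ (H a d) * starRingEnd ℂ (H c b) =
      B (τ₁ a) (τ₂.symm b) * B (τ₁ c) (τ₂.symm d) *
      starRingEnd ℂ (B (τ₁ a) (τ₂.symm d)) * starRingEnd ℂ (B (τ₁ c) (τ₂.symm b)) := by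
    have hBval : ∀ x y, B (τ₁ x) (τ₂.symm y) = e₁ x * H x y * e₂ y := by
      intro x y; rw [hBe]; simp
    rw [hBval, hBval, hBval, hBval]
    simp only [_root_.map_mul]
    have : e₁ a * H a b * e₂ b * (e₁ c * H c d * e₂ d) *
        (starRingEnd ℂ (e₁ a) * starRingEnd ℂ (H a d) * starRingEnd ℂ (e₂ d)) *
        (starRingEnd ℂ (e₁ c) * starRingEnd ℂ (H c b) * starRingEnd ℂ (e₂ b)) =
        (e₁ a * starRingEnd ℂ (e₁ a)) * (e₁ c * starRingEnd ℂ (e₁ c)) *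
        (e₂ b * starRingEnd ℂ (e₂ b)) * (e₂ d * starRingEnd ℂ (e₂ d)) *
        (H a b * H c d * starRingEnd ℂ (H a d) * starRingEnd ℂ (H c b)) := by ring
    rw [this, he₁, he₁, he₂, he₂]; ring
  rw [hKH, hHBelt]
  simp only [mul_pow, ← map_pow, hBq]
  simp
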